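/- Let R be a Noetherian local domain and let 𝓘 = {I_n} be a discrete valued filtration of R. Then the Rees algebra R[𝓘] = ⊕_{n≥0} I_n t^n is integrally closed in the polynomial ring R[t], i.e., \overline{R[𝓘]} = R[𝓘]. -/

import Mathlib

set_option synthInstance.maxHeartbeats 1000000
set_option maxHeartbeats 1000000

open Filter Polynomial IsLocalRing

/-- The length `ℓ_R(M)` of an `R`-module `M`, as a real number.  (The length of a module
equals the Krull dimension of its lattice of submodules; modules of infinite length are
sent to `0`.) -/
noncomputable def mlen (R M : Type*) [CommRing R] [AddCommGroup M] [Module R M] : ℝ :=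
  (((Order.krullDim (Submodule R M)).unbotD 0).untopD 0 : ℕ)

/-- `ℓ_R(R/I)`, as a real number. -/
noncomputable def colen (R : Type*) [CommRing R] (I : Ideal R) : ℝ := mlen R (R ⧸ I)

/-- The valuation ideal `I(ν)_n = 𝔪_ν ^ n ∩ R` attached to a local subring `𝒪_ν` of the
fraction field of `R` containing `R`. -/
noncomputable def valIdeal {R : Type*} [CommRing R] [IsDomain R]
    (O : Subring (FractionRing R)) (hloc : IsLocalRing O)
    (hsub : ∀ x : R, algebraMap R (FractionRing R) x ∈ O) (n : ℕ) : Ideal R :=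
  Ideal.comap ((algebraMap R (FractionRing R)).codRestrict O hsub)
    (@IsLocalRing.maximalIdeal O _ hloc ^ n)

/-- The Rees algebra `⊕ₙ Iₙ tⁿ ⊆ R[t]` of a filtration of ideals `I`. -/
noncomputable def reesAlg {R : Type*} [CommRing R] (I : ℕ → Ideal R) :
    Subalgebra R (Polynomial R) :=
  Algebra.adjoin R {p : Polynomial R | ∃ n : ℕ, ∃ x ∈ I n, p = Polynomial.C x * Polynomial.X ^ n}

open scoped NNReal

namespace ReesAux

open scoped NNReal

section Gnorm

variable {R : Type*} [CommRing R]

/-- Gauss norm of a polynomial w.r.t. a multiplicative nonarchimedean norm `w` on `R`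
and a weight `ρ`. -/
noncomputable def gnorm (w : R → ℝ≥0) (ρ : ℝ≥0) (p : Polynomial R) : ℝ≥0 :=
  p.support.sup fun n => w (p.coeff n) * ρ ^ n

variable {w : R → ℝ≥0} {ρ : ℝ≥0}
variable (hmul : ∀ x y, w (x * y) = w x * w y)
variable (hadd : ∀ x y, w (x + y) ≤ max (w x) (w y))
variable (h0 : w 0 = 0) (h1 : w 1 = 1) (hz : ∀ x, w x = 0 → x = 0)
variable (hρ : 0 < ρ)

theorem max_mul_right (a b c : ℝ≥0) : max a b * c = max (a * c) (b * c) := by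
  rcases le_total a b with h | h
  · rw [max_eq_right h, max_eq_right (mul_le_mul_left h c)]
  · rw [max_eq_left h, max_eq_left (mul_le_mul_left h c)]

theorem coeff_le (h0 : w 0 = 0) (p : Polynomial R) (n : ℕ) :
    w (p.coeff n) * ρ ^ n ≤ gnorm w ρ p := by
  by_cases hn : n ∈ p.support
  · exact Finset.le_sup (f := fun n => w (p.coeff n) * ρ ^ n) hn
  · rw [Polynomial.notMem_support_iff.mp hn, h0, zero_mul]
    exact zero_le

theorem gnorm_le {p : Polynomial R} {C : ℝ≥0}
    (h : ∀ n, w (p.coeff n) * ρ ^ n ≤ C) : gnorm w ρ p ≤ C :=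
  Finset.sup_le fun n _ => h n

theorem gnorm_zero : gnorm w ρ (0 : Polynomial R) = 0 := by
  simp [gnorm]

include hmul h1 in
theorem w_neg (x : R) : w (-x) = w x := by
  have hm1 : w (-1) = 1 := by
    have hww : w (-1) * w (-1) = 1 := by rw [← hmul]; simpa using h1
    have hr : (w (-1) : ℝ) * (w (-1) : ℝ) = 1 := by exact_mod_cast congrArg NNReal.toReal hww
    rcases mul_self_eq_one_iff.mp hr with h | h
    · exact NNReal.coe_injective (by simpa using h)
    · exfalso; have := (w (-1)).coe_nonneg; rw [h] at this; linarith
  calc w (-x) = w (-1 * x) := by ring_nf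
    _ = w (-1) * w x := hmul _ _
    _ = w x := by rw [hm1, one_mul]

include hadd h0 in
theorem w_sum_mul_le {ι : Type*} (s : Finset ι) (g : ι → R) (c C : ℝ≥0)
    (h : ∀ x ∈ s, w (g x) * c ≤ C) : w (∑ x ∈ s, g x) * c ≤ C := by
  classical
  induction s using Finset.induction_on with
  | empty => simp [h0]
  | @insert a s' hx ih =>
    rw [Finset.sum_insert hx]
    calc w (g a + ∑ x ∈ s', g x) * c ≤ max (w (g a)) (w (∑ x ∈ s', g x)) * c :=
          mul_le_mul_left (hadd _ _) c
      _ = max (w (g a) * c) (w (∑ x ∈ s', g x) * c) :=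
          max_mul_right _ _ c
      _ ≤ C := max_le (h a (Finset.mem_insert_self _ _))
          (ih fun x hx' => h x (Finset.mem_insert_of_mem hx'))

include hadd h0 in
theorem w_sum_mul_lt {ι : Type*} (s : Finset ι) (g : ι → R) (c C : ℝ≥0) (hC : 0 < C)
    (h : ∀ x ∈ s, w (g x) * c < C) : w (∑ x ∈ s, g x) * c < C := by
  classical
  induction s using Finset.induction_on with
  | empty => simpa [h0] using hC
  | @insert a s' hx ih =>
    rw [Finset.sum_insert hx]
    calc w (g a + ∑ x ∈ s', g x) * c ≤ max (w (g a)) (w (∑ x ∈ s', g x)) * c :=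
          mul_le_mul_left (hadd _ _) c
      _ = max (w (g a) * c) (w (∑ x ∈ s', g x) * c) :=
          max_mul_right _ _ c
      _ < C := max_lt (h a (Finset.mem_insert_self _ _))
          (ih fun x hx' => h x (Finset.mem_insert_of_mem hx'))

include hadd hmul h0 h1 in
theorem w_add_eq {x y : R} (h : w y < w x) : w (x + y) = w x := by
  refine le_antisymm (le_trans (hadd x y) (max_le le_rfl h.le)) ?_
  by_contra hlt
  push_neg at hlt
  have : w x ≤ max (w (x + y)) (w y) := by
    have := hadd (x + y) (-y)
    rw [add_neg_cancel_right, w_neg hmul h1] at this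
    exact this
  exact absurd this (not_le.mpr (max_lt hlt h))

include hadd h0 in
theorem gnorm_add_le (p q : Polynomial R) :
    gnorm w ρ (p + q) ≤ max (gnorm w ρ p) (gnorm w ρ q) := by
  refine gnorm_le fun n => ?_
  rw [Polynomial.coeff_add]
  calc w (p.coeff n + q.coeff n) * ρ ^ n
      ≤ max (w (p.coeff n)) (w (q.coeff n)) * ρ ^ n := mul_le_mul_left (hadd _ _) _
    _ = max (w (p.coeff n) * ρ ^ n) (w (q.coeff n) * ρ ^ n) :=
        max_mul_right _ _ _
    _ ≤ max (gnorm w ρ p) (gnorm w ρ q) :=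
        max_le_max (coeff_le h0 p n) (coeff_le h0 q n)

include hadd h0 in
theorem gnorm_sum_le {ι : Type*} (s : Finset ι) (g : ι → Polynomial R) (C : ℝ≥0)
    (h : ∀ x ∈ s, gnorm w ρ (g x) ≤ C) : gnorm w ρ (∑ x ∈ s, g x) ≤ C := by
  classical
  induction s using Finset.induction_on with
  | empty => simpa [gnorm_zero] using zero_le C
  | @insert a s' hx ih =>
    rw [Finset.sum_insert hx]
    refine le_trans (gnorm_add_le hadd h0 _ _) (max_le (h a (Finset.mem_insert_self _ _))
      (ih fun x hx' => h x (Finset.mem_insert_of_mem hx')))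

include hmul hadd h0 in
theorem gnorm_mul_le (p q : Polynomial R) :
    gnorm w ρ (p * q) ≤ gnorm w ρ p * gnorm w ρ q := by
  refine gnorm_le fun n => ?_
  rw [Polynomial.coeff_mul]
  refine w_sum_mul_le hadd h0 _ _ _ _ fun x hx => ?_
  have hxn : x.1 + x.2 = n := Finset.HasAntidiagonal.mem_antidiagonal.mp hx
  rw [hmul, ← hxn, pow_add, mul_mul_mul_comm]
  exact mul_le_mul' (coeff_le h0 p x.1) (coeff_le h0 q x.2)

include hmul hadd h0 h1 hz hρ in
theorem gnorm_mul_ge (p q : Polynomial R) :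
    gnorm w ρ p * gnorm w ρ q ≤ gnorm w ρ (p * q) := by
  classical
  by_cases hp : p = 0
  · simp [hp, gnorm_zero]
  by_cases hq : q = 0
  · simp [hq, gnorm_zero]
  -- argmax indices
  set Fp := p.support.filter fun n => w (p.coeff n) * ρ ^ n = gnorm w ρ p with hFp
  set Fq := q.support.filter fun n => w (q.coeff n) * ρ ^ n = gnorm w ρ q with hFq
  have hFpne : Fp.Nonempty := by
    obtain ⟨b, hb, hsup⟩ := Finset.exists_mem_eq_sup p.support
      (Polynomial.nonempty_support_iff.mpr hp) fun n => w (p.coeff n) * ρ ^ n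
    exact ⟨b, Finset.mem_filter.mpr ⟨hb, hsup.symm⟩⟩
  have hFqne : Fq.Nonempty := by
    obtain ⟨b, hb, hsup⟩ := Finset.exists_mem_eq_sup q.support
      (Polynomial.nonempty_support_iff.mpr hq) fun n => w (q.coeff n) * ρ ^ n
    exact ⟨b, Finset.mem_filter.mpr ⟨hb, hsup.symm⟩⟩
  set j0 := Fp.max' hFpne with hj0
  set k0 := Fq.max' hFqne with hk0
  have hj0mem := Finset.mem_filter.mp (Finset.max'_mem Fp hFpne)
  have hk0mem := Finset.mem_filter.mp (Finset.max'_mem Fq hFqne)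
  have hpj0 : w (p.coeff j0) * ρ ^ j0 = gnorm w ρ p := hj0mem.2
  have hqk0 : w (q.coeff k0) * ρ ^ k0 = gnorm w ρ q := hk0mem.2
  have hgp_pos : 0 < gnorm w ρ p := by
    rw [← hpj0]
    have : w (p.coeff j0) ≠ 0 := fun h =>
      Polynomial.mem_support_iff.mp hj0mem.1 (hz _ h)
    exact mul_pos (pos_iff_ne_zero.mpr this) (pow_pos hρ _)
  have hgq_pos : 0 < gnorm w ρ q := by
    rw [← hqk0]
    have : w (q.coeff k0) ≠ 0 := fun h =>
      Polynomial.mem_support_iff.mp hk0mem.1 (hz _ h)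
    exact mul_pos (pos_iff_ne_zero.mpr this) (pow_pos hρ _)
  have hplt : ∀ j, j0 < j → w (p.coeff j) * ρ ^ j < gnorm w ρ p := by
    intro j hj
    by_cases hjs : j ∈ p.support
    · refine lt_of_le_of_ne (coeff_le h0 p j) fun heq => ?_
      have : j ∈ Fp := Finset.mem_filter.mpr ⟨hjs, heq⟩
      exact absurd (Finset.le_max' Fp j this) (not_le.mpr hj)
    · rw [Polynomial.notMem_support_iff.mp hjs, h0, zero_mul]
      exact hgp_pos
  have hqlt : ∀ k, k0 < k → w (q.coeff k) * ρ ^ k < gnorm w ρ q := by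
    intro k hk
    by_cases hks : k ∈ q.support
    · refine lt_of_le_of_ne (coeff_le h0 q k) fun heq => ?_
      have : k ∈ Fq := Finset.mem_filter.mpr ⟨hks, heq⟩
      exact absurd (Finset.le_max' Fq k this) (not_le.mpr hk)
    · rw [Polynomial.notMem_support_iff.mp hks, h0, zero_mul]
      exact hgq_pos
  -- the key coefficient
  set n0 := j0 + k0 with hn0
  have hmem : ((j0, k0) : ℕ × ℕ) ∈ Finset.HasAntidiagonal.antidiagonal n0 :=
    Finset.HasAntidiagonal.mem_antidiagonal.mpr rfl
  have hsplit : p.coeff j0 * q.coeff k0 +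
      ∑ x ∈ (Finset.HasAntidiagonal.antidiagonal n0).erase (j0, k0), p.coeff x.1 * q.coeff x.2
      = (p * q).coeff n0 := by
    rw [Polynomial.coeff_mul]
    exact Finset.add_sum_erase _ (fun x : ℕ × ℕ => p.coeff x.1 * q.coeff x.2) hmem
  have hmain : w (p.coeff j0 * q.coeff k0) * ρ ^ n0 = gnorm w ρ p * gnorm w ρ q := by
    rw [hmul, hn0, pow_add, mul_mul_mul_comm, hpj0, hqk0]
  have hrest : w (∑ x ∈ (Finset.HasAntidiagonal.antidiagonal n0).erase (j0, k0),
      p.coeff x.1 * q.coeff x.2) * ρ ^ n0 < gnorm w ρ p * gnorm w ρ q := by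
    refine w_sum_mul_lt hadd h0 _ _ _ _ (mul_pos hgp_pos hgq_pos) fun x hx => ?_
    have hxne : x ≠ (j0, k0) := Finset.ne_of_mem_erase hx
    have hxad : x.1 + x.2 = n0 :=
      Finset.HasAntidiagonal.mem_antidiagonal.mp (Finset.mem_of_mem_erase hx)
    rw [hmul, ← hxad, pow_add, mul_mul_mul_comm]
    rcases lt_trichotomy x.1 j0 with hlt' | heq' | hgt'
    · have hk : k0 < x.2 := by omega
      calc w (p.coeff x.1) * ρ ^ x.1 * (w (q.coeff x.2) * ρ ^ x.2)
          ≤ gnorm w ρ p * (w (q.coeff x.2) * ρ ^ x.2) :=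
            mul_le_mul_left (coeff_le h0 p x.1) _
        _ < gnorm w ρ p * gnorm w ρ q :=
            mul_lt_mul_of_pos_left (hqlt _ hk) hgp_pos
    · exfalso; apply hxne; have : x.2 = k0 := by omega
      exact Prod.ext heq' this
    · calc w (p.coeff x.1) * ρ ^ x.1 * (w (q.coeff x.2) * ρ ^ x.2)
          ≤ w (p.coeff x.1) * ρ ^ x.1 * gnorm w ρ q :=
            mul_le_mul_right (coeff_le h0 q x.2) _
        _ < gnorm w ρ p * gnorm w ρ q :=
            mul_lt_mul_of_pos_right (hplt _ hgt') hgq_pos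
  have hwrest_lt : w (∑ x ∈ (Finset.HasAntidiagonal.antidiagonal n0).erase (j0, k0),
      p.coeff x.1 * q.coeff x.2) < w (p.coeff j0 * q.coeff k0) := by
    have := hrest
    rw [← hmain] at this
    exact lt_of_mul_lt_mul_right this zero_le
  have hcoeff : w ((p * q).coeff n0) = w (p.coeff j0 * q.coeff k0) := by
    rw [← hsplit]
    exact w_add_eq hmul hadd h0 h1 hwrest_lt
  calc gnorm w ρ p * gnorm w ρ q = w ((p * q).coeff n0) * ρ ^ n0 := by
        rw [hcoeff, hmain]
    _ ≤ gnorm w ρ (p * q) := coeff_le h0 (p * q) n0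

include hmul h1 in
theorem gnorm_neg (p : Polynomial R) : gnorm w ρ (-p) = gnorm w ρ p := by
  unfold gnorm
  rw [Polynomial.support_neg]
  refine Finset.sup_congr rfl fun n _ => ?_
  rw [Polynomial.coeff_neg, w_neg hmul h1]

include hmul hadd h0 h1 hz hρ in
theorem gnorm_pow_ge (p : Polynomial R) (m : ℕ) :
    gnorm w ρ p ^ m ≤ gnorm w ρ (p ^ m) := by
  induction m with
  | zero =>
    rw [pow_zero, pow_zero]
    have h := coeff_le (ρ := ρ) h0 (1 : Polynomial R) 0
    simpa [h1] using h
  | succ m ih =>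
    rw [pow_succ, pow_succ]
    calc gnorm w ρ p ^ m * gnorm w ρ p ≤ gnorm w ρ (p ^ m) * gnorm w ρ p :=
          mul_le_mul_left ih _
      _ ≤ gnorm w ρ (p ^ m * p) := gnorm_mul_ge hmul hadd h0 h1 hz hρ _ _

include hmul hadd h0 h1 in
theorem gnorm_pow_le (p : Polynomial R) {C : ℝ≥0} (h1C : 1 ≤ C) (hC : gnorm w ρ p ≤ C) (m : ℕ) :
    gnorm w ρ (p ^ m) ≤ C ^ m := by
  induction m with
  | zero =>
    rw [pow_zero, pow_zero]
    refine gnorm_le fun n => ?_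
    rcases Nat.eq_zero_or_pos n with hn | hn
    · subst hn; simp [Polynomial.coeff_one, h1]
    · rw [Polynomial.coeff_one, if_neg (by omega), h0, zero_mul]
      exact zero_le_one
  | succ m ih =>
    rw [pow_succ, pow_succ]
    exact le_trans (gnorm_mul_le hmul hadd h0 _ _) (mul_le_mul' ih hC)

end Gnorm

section Rees

variable {R : Type*} [CommRing R]

/-- The subalgebra of polynomials whose `n`-th coefficient lies in `I n`. -/
noncomputable def coeffAlg (I : ℕ → Ideal R) (hI0 : I 0 = ⊤)
    (hImul : ∀ {j k : ℕ} {x y : R}, x ∈ I j → y ∈ I k → x * y ∈ I (j + k)) :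
    Subalgebra R (Polynomial R) where
  carrier := {p : Polynomial R | ∀ n, p.coeff n ∈ I n}
  mul_mem' := by
    intro p q hp hq n
    rw [Polynomial.coeff_mul]
    refine Submodule.sum_mem _ fun x hx => ?_
    have hxn : x.1 + x.2 = n := Finset.HasAntidiagonal.mem_antidiagonal.mp hx
    exact hxn ▸ hImul (hp x.1) (hq x.2)
  one_mem' := by
    intro n
    rcases Nat.eq_zero_or_pos n with hn | hn
    · subst hn; rw [hI0]; trivial
    · rw [Polynomial.coeff_one, if_neg (by omega)]; exact Submodule.zero_mem _
  add_mem' := by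
    intro p q hp hq n
    rw [Polynomial.coeff_add]
    exact Ideal.add_mem _ (hp n) (hq n)
  zero_mem' := by
    intro n
    simpa using Ideal.zero_mem (I n)
  algebraMap_mem' := by
    intro r n
    rcases Nat.eq_zero_or_pos n with hn | hn
    · subst hn; rw [hI0]; trivial
    · simp only [Polynomial.algebraMap_apply, Polynomial.coeff_C, if_neg (by omega : ¬ n = 0)]
      exact Submodule.zero_mem _

theorem mem_reesAlg_iff (I : ℕ → Ideal R) (hI0 : I 0 = ⊤)
    (hImul : ∀ {j k : ℕ} {x y : R}, x ∈ I j → y ∈ I k → x * y ∈ I (j + k))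
    (p : Polynomial R) : p ∈ reesAlg I ↔ ∀ n, p.coeff n ∈ I n := by
  constructor
  · intro hp
    have hle : reesAlg I ≤ coeffAlg I hI0 hImul := by
      rw [reesAlg, Algebra.adjoin_le_iff]
      rintro q ⟨n, x, hx, rfl⟩
      intro k
      by_cases hk : k = n
      · subst hk
        simpa [Polynomial.coeff_C_mul, Polynomial.coeff_X_pow] using hx
      · simp only [Polynomial.coeff_C_mul, Polynomial.coeff_X_pow, if_neg hk,
          mul_zero]
        exact Submodule.zero_mem _
    exact hle hp
  · intro hp
    rw [Polynomial.as_sum_support p]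
    exact Subalgebra.sum_mem _ fun n _ =>
      Algebra.subset_adjoin ⟨n, p.coeff n, hp n,
        (Polynomial.C_mul_X_pow_eq_monomial (n := n) (a := p.coeff n)).symm⟩

end Rees

section DVR

open IsDedekindDomain Multiplicative WithZero

/-- Construction of the multiplicative norm associated to a discrete valuation subring. -/
theorem dvr_key {R : Type*} [CommRing R] [IsDomain R]
    (O : Subring (FractionRing R)) (hloc : IsLocalRing O) (hdvr : IsDiscreteValuationRing O)
    (hvr : ∀ x : FractionRing R, x ≠ 0 → x ∈ O ∨ x⁻¹ ∈ O)
    (hsub : ∀ x : R, algebraMap R (FractionRing R) x ∈ O) :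
    ∃ w : R → ℝ≥0, (∀ x y, w (x * y) = w x * w y) ∧
      (∀ x y, w (x + y) ≤ max (w x) (w y)) ∧
      (w 0 = 0) ∧ (w 1 = 1) ∧ (∀ x, w x = 0 → x = 0) ∧
      (∀ (x : R) (c : ℝ), 0 ≤ c →
        (x ∈ valIdeal O hloc hsub ⌈c⌉₊ ↔ w x ≤ (2 : ℝ≥0) ^ (-c))) := by
  classical
  have hmemV : ∀ x : FractionRing R, x ∈ O ∨ x⁻¹ ∈ O := by
    intro x
    by_cases hx : x = 0
    · left; rw [hx]; exact O.zero_mem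
    · exact hvr x hx
  let V : ValuationSubring (FractionRing R) := { O with mem_or_inv_mem' := hmemV }
  let φ : R →+* FractionRing R := algebraMap R (FractionRing R)
  haveI hdvrV : IsDiscreteValuationRing V := hdvr
  let P : HeightOneSpectrum V :=
    { asIdeal := IsLocalRing.maximalIdeal V
      isPrime := Ideal.IsMaximal.isPrime (IsLocalRing.maximalIdeal.isMaximal V)
      ne_bot := IsDiscreteValuationRing.not_a_field V }
  have h2 : (2 : ℝ≥0) ≠ 0 := two_ne_zero
  set f := WithZeroMulInt.toNNReal h2 with hf
  have hfmono : StrictMono f := WithZeroMulInt.toNNReal_strictMono one_lt_two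
  set v := P.valuation (K := FractionRing R) with hv
  refine ⟨fun x => f (v (φ x)), ?_, ?_, ?_, ?_, ?_, ?_⟩
  · intro x y
    show f (v (φ (x * y))) = f (v (φ x)) * f (v (φ y))
    rw [map_mul, map_mul, map_mul]
  · intro x y
    show f (v (φ (x + y))) ≤ max (f (v (φ x))) (f (v (φ y)))
    rw [map_add]
    exact le_trans (hfmono.monotone (v.map_add _ _)) (le_of_eq (hfmono.monotone.map_max))
  · show f (v (φ 0)) = 0
    rw [map_zero, map_zero, map_zero]
  · show f (v (φ 1)) = 1
    rw [map_one, map_one, map_one]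
  · intro x hx
    replace hx : f (v (φ x)) = 0 := hx
    rw [_root_.map_eq_zero, Valuation.zero_iff] at hx
    exact IsFractionRing.injective R (FractionRing R) (by rw [hx, map_zero])
  · intro x c hc
    show x ∈ valIdeal O hloc hsub ⌈c⌉₊ ↔ f (v (φ x)) ≤ (2 : ℝ≥0) ^ (-c)
    by_cases hx0 : x = 0
    · subst hx0
      rw [map_zero, map_zero, map_zero]
      exact iff_of_true (Submodule.zero_mem _) zero_le
    -- step 1 : membership in the valuation ideal in terms of v
    have hstep1 : ∀ k : ℕ, x ∈ valIdeal O hloc hsub k ↔ v (φ x) ≤ ofAdd (-(k : ℤ)) := by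
      intro k
      rw [valIdeal, Ideal.mem_comap]
      set y : V := (φ.codRestrict O hsub) x with hy
      have hcoe : (algebraMap V (FractionRing R)) y = φ x := rfl
      have hmax : (@IsLocalRing.maximalIdeal O _ hloc : Ideal V) = P.asIdeal := rfl
      rw [hmax]
      have : v (φ x) = P.intValuation y := by
        rw [← hcoe, hv, P.valuation_of_algebraMap]
      rw [this]
      rw [show P.intValuation y = P.intValuationDef y from rfl]
      exact (P.intValuation_le_pow_iff_mem y k).symm
    -- the value of v on x is a coerced integer
    have hvne : v (φ x) ≠ 0 := by
      rw [Valuation.ne_zero_iff]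
      exact fun h => hx0 (IsFractionRing.injective R (FractionRing R) (by rw [h, map_zero]))
    set t : ℤ := toAdd (WithZero.unzero hvne) with ht
    have hvx : v (φ x) = (ofAdd t : Multiplicative ℤ) := by
      rw [ht, ofAdd_toAdd, WithZero.coe_unzero]
    have hwx : f (v (φ x)) = (2 : ℝ≥0) ^ t := by
      rw [WithZeroMulInt.toNNReal_neg_apply h2 hvne]
    -- step 2 : comparison with real powers
    have hbridge : (t ≤ -(⌈c⌉₊ : ℤ)) ↔ ((t : ℝ) ≤ -c) := by
      constructor
      · intro h
        have h1 : (t : ℝ) ≤ -(⌈c⌉₊ : ℝ) := by exact_mod_cast h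
        have h2 : c ≤ (⌈c⌉₊ : ℝ) := Nat.le_ceil c
        linarith
      · intro h
        have ht0 : t ≤ 0 := by
          have : (t : ℝ) ≤ 0 := le_trans h (by linarith)
          exact_mod_cast this
        have hc' : c ≤ ((-t).toNat : ℝ) := by
          have hcast : ((-t).toNat : ℝ) = ((-t : ℤ) : ℝ) := by
            norm_cast
            omega
          rw [hcast]
          push_cast
          linarith
        have := Nat.ceil_le.mpr hc'
        omega
    rw [hstep1 ⌈c⌉₊]
    have hiff : v (φ x) ≤ ((ofAdd (-(⌈c⌉₊ : ℤ)) : Multiplicative ℤ) : WithZero (Multiplicative ℤ)) ↔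
        t ≤ -(⌈c⌉₊ : ℤ) := by
      rw [hvx, WithZero.coe_le_coe]
      exact Multiplicative.ofAdd_le
    rw [hiff, hbridge, hwx, ← NNReal.rpow_intCast 2 t, ← NNReal.coe_le_coe,
      NNReal.coe_rpow, NNReal.coe_rpow, NNReal.coe_ofNat,
      Real.rpow_le_rpow_left_iff (by norm_num : (1:ℝ) < 2)]
end DVR


end ReesAux

theorem rees_algebra_of_discrete_valued_filtration_is_integrally_closed
    {R : Type*} [CommRing R] [IsDomain R] [IsNoetherianRing R] [IsLocalRing R]
    (r : ℕ) (hr : 0 < r)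
    (O : Fin r → Subring (FractionRing R))
    (hloc : ∀ i, IsLocalRing (O i))
    (hdvr : ∀ i, IsDiscreteValuationRing (O i))
    (hvr : ∀ i, ∀ x : FractionRing R, x ≠ 0 → x ∈ O i ∨ x⁻¹ ∈ O i)
    (hsub : ∀ i, ∀ x : R, algebraMap R (FractionRing R) x ∈ O i)
    (a : Fin r → ℝ) (ha : ∀ i, 0 < a i)
    (I : ℕ → Ideal R)
    (hI : ∀ n : ℕ, I n = ⨅ i, valIdeal (O i) (hloc i) (hsub i) ⌈(n : ℝ) * a i⌉₊) :
    ∀ p : Polynomial R, (reesAlg I).val.toRingHom.IsIntegralElem p ↔ p ∈ reesAlg I := by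
  classical
  have hI0 : I 0 = ⊤ := by
    rw [hI 0]
    have h0 : ∀ i, valIdeal (O i) (hloc i) (hsub i) ⌈((0 : ℕ) : ℝ) * a i⌉₊ = ⊤ := fun i => by
      rw [show ⌈((0 : ℕ) : ℝ) * a i⌉₊ = 0 by simp, valIdeal, pow_zero, Ideal.one_eq_top,
        Ideal.comap_top]
    simp only [h0, iInf_top]
  have hImul : ∀ {j k : ℕ} {x y : R}, x ∈ I j → y ∈ I k → x * y ∈ I (j + k) := by
    intro j k x y hx hy
    rw [hI] at hx hy ⊢
    rw [Ideal.mem_iInf] at hx hy ⊢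
    intro i
    have hx' := hx i
    have hy' := hy i
    rw [valIdeal, Ideal.mem_comap] at hx' hy' ⊢
    rw [map_mul]
    have hceil : ⌈((j + k : ℕ) : ℝ) * a i⌉₊ ≤ ⌈(j : ℝ) * a i⌉₊ + ⌈(k : ℝ) * a i⌉₊ := by
      have hcast : ((j + k : ℕ) : ℝ) * a i = (j : ℝ) * a i + (k : ℝ) * a i := by
        push_cast; ring
      rw [hcast]
      exact Nat.ceil_add_le _ _
    refine Ideal.pow_le_pow_right hceil ?_
    rw [pow_add]
    exact Ideal.mul_mem_mul hx' hy'
  intro p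
  constructor
  · rintro ⟨q, hq, hev⟩
    rw [ReesAux.mem_reesAlg_iff I hI0 hImul]
    intro n
    rw [hI n, Ideal.mem_iInf]
    intro i
    obtain ⟨w, hwm, hwa, hw0, hw1, hwz, hkey⟩ :=
      ReesAux.dvr_key (O i) (hloc i) (hdvr i) (hvr i) (hsub i)
    set ρ : ℝ≥0 := (2 : ℝ≥0) ^ (a i) with hρdef
    have hρ : (0 : ℝ≥0) < ρ := NNReal.rpow_pos (by norm_num)
    have hρn : ∀ m : ℕ, ρ ^ m = (2 : ℝ≥0) ^ ((m : ℝ) * a i) := by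
      intro m
      rw [hρdef, ← NNReal.rpow_natCast ((2 : ℝ≥0) ^ (a i)) m, ← NNReal.rpow_mul, mul_comm]
    have h2ne : (2 : ℝ≥0) ≠ 0 := by norm_num
    -- every element of the Rees algebra has Gauss norm at most one
    have hS : ∀ s : Polynomial R, s ∈ reesAlg I → ReesAux.gnorm w ρ s ≤ 1 := by
      intro s hs
      rw [ReesAux.mem_reesAlg_iff I hI0 hImul] at hs
      refine ReesAux.gnorm_le fun k => ?_
      have hk := hs k
      rw [hI k, Ideal.mem_iInf] at hk
      have hwk := (hkey (s.coeff k) ((k : ℝ) * a i)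
        (mul_nonneg (Nat.cast_nonneg _) (ha i).le)).mp (hk i)
      calc w (s.coeff k) * ρ ^ k
          ≤ (2 : ℝ≥0) ^ (-((k : ℝ) * a i)) * ρ ^ k := mul_le_mul_left hwk _
        _ = 1 := by
            rw [hρn k, ← NNReal.rpow_add h2ne, neg_add_cancel, NNReal.rpow_zero]
    -- the Gauss norm of p is at most one
    have hple : ReesAux.gnorm w ρ p ≤ 1 := by
      by_contra hlt
      push_neg at hlt
      set m := q.natDegree with hm
      have hm1 : 1 ≤ m := by
        rcases Nat.eq_zero_or_pos m with h0 | h1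
        · exfalso
          have hq1 : q = 1 := (Polynomial.Monic.natDegree_eq_zero hq).mp h0
          rw [hq1, Polynomial.eval₂_one] at hev
          exact one_ne_zero hev
        · exact h1
      have hev' := hev
      rw [Polynomial.eval₂_eq_sum_range, Finset.sum_range_succ] at hev'
      have hqm : q.coeff m = 1 := hq.coeff_natDegree
      rw [hqm, map_one, one_mul] at hev'
      have hpm : p ^ m = -∑ j ∈ Finset.range m,
          (reesAlg I).val.toRingHom (q.coeff j) * p ^ j :=
        eq_neg_of_add_eq_zero_right hev'
      have hub : ReesAux.gnorm w ρ (p ^ m) ≤ (ReesAux.gnorm w ρ p) ^ (m - 1) := by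
        rw [hpm, ReesAux.gnorm_neg hwm hw1]
        refine ReesAux.gnorm_sum_le hwa hw0 _ _ _ fun j hj => ?_
        have hjm : j < m := Finset.mem_range.mp hj
        calc ReesAux.gnorm w ρ ((reesAlg I).val.toRingHom (q.coeff j) * p ^ j)
            ≤ ReesAux.gnorm w ρ ((reesAlg I).val.toRingHom (q.coeff j)) *
              ReesAux.gnorm w ρ (p ^ j) := ReesAux.gnorm_mul_le hwm hwa hw0 _ _
          _ ≤ 1 * (ReesAux.gnorm w ρ p) ^ j := by
              refine mul_le_mul' (hS _ (q.coeff j).2)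
                (ReesAux.gnorm_pow_le hwm hwa hw0 hw1 p hlt.le le_rfl j)
          _ ≤ (ReesAux.gnorm w ρ p) ^ (m - 1) := by
              rw [one_mul]
              exact pow_le_pow_right₀ hlt.le (by omega)
      have hlb : (ReesAux.gnorm w ρ p) ^ m ≤ ReesAux.gnorm w ρ (p ^ m) :=
        ReesAux.gnorm_pow_ge hwm hwa hw0 hw1 hwz hρ p m
      have hcontra : (ReesAux.gnorm w ρ p) ^ m < (ReesAux.gnorm w ρ p) ^ m :=
        lt_of_le_of_lt (le_trans hlb hub) (pow_lt_pow_right₀ hlt (by omega))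
      exact lt_irrefl _ hcontra
    -- conclude coefficientwise
    refine (hkey (p.coeff n) ((n : ℝ) * a i)
      (mul_nonneg (Nat.cast_nonneg _) (ha i).le)).mpr ?_
    have h := le_trans (ReesAux.coeff_le hw0 p n) hple
    rw [hρn n] at h
    have h' := mul_le_mul_left h ((2 : ℝ≥0) ^ (-((n : ℝ) * a i)))
    rwa [one_mul, mul_assoc, ← NNReal.rpow_add h2ne, add_neg_cancel, NNReal.rpow_zero,
      mul_one] at h'
  · intro hp
    refine ⟨Polynomial.X - Polynomial.C ⟨p, hp⟩, Polynomial.monic_X_sub_C _, ?_⟩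
    rw [Polynomial.eval₂_sub, Polynomial.eval₂_X, Polynomial.eval₂_C]
    exact sub_self p
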